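/- arXiv:0805.2163 — 2 statements merged into one kernel-verified Lean document; each statement's English description precedes it below -/
import Mathlib

section
/- Let G be a finite graph and D ⊆ V(G) a nonempty set of vertices such that G \ D is a forest. Then the absolute value of the alternating sum Σ_{σ independent in G} (-1)^{|σ|} is at most the number of independent sets of the induced subgraph G[D]. -/
open Finset

attribute [local instance] Classical.propDecidable

/-- `s` is an independent set of the graph `G`. -/
def SimpleGraph.IsIndep {V : Type*} (G : SimpleGraph V) (s : Finset V) : Prop :=
  ∀ u ∈ s, ∀ v ∈ s, ¬ G.Adj u v

section Aux

variable {V : Type*}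

lemma induce_acyclic_mono (G : SimpleGraph V) {s t : Set V} (hst : s ⊆ t)
    (h : (G.induce t).IsAcyclic) : (G.induce s).IsAcyclic := by
  intro v c hc
  exact h (c.map ⟨Set.inclusion hst, fun a => a⟩)
    (hc.map (Set.inclusion_injective hst))

/-- A finite acyclic graph with an edge has a vertex with exactly one neighbor. -/
lemma exists_leaf {W : Type*} [Fintype W] (H : SimpleGraph W) (hac : H.IsAcyclic)
    {a b : W} (hab : H.Adj a b) :
    ∃ v u, H.Adj v u ∧ ∀ w, H.Adj v w → w = u := by
  by_contra hno
  push_neg at hno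
  have key : ∀ n : ℕ, ∃ (x y : W) (p : H.Walk x y), p.IsPath ∧ n + 1 ≤ p.length := by
    intro n
    induction n with
    | zero =>
      refine ⟨a, b, .cons hab .nil, ?_, by simp⟩
      simp [SimpleGraph.Walk.cons_isPath_iff, hab.ne]
    | succ n ih =>
      obtain ⟨x, y, p, hp, hlen⟩ := ih
      rcases Nat.lt_or_ge (n + 1) p.length with hl | hl
      · exact ⟨x, y, p, hp, hl⟩
      cases p with
      | nil => simp at hlen
      | @cons _ c _ hxc q =>
        obtain ⟨w, hxw, hwc⟩ := hno x c hxc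
        have hq : q.IsPath ∧ x ∉ q.support := by
          rw [SimpleGraph.Walk.cons_isPath_iff] at hp; exact hp
        by_cases hw : w ∈ (SimpleGraph.Walk.cons hxc q).support
        · exfalso
          have hwx : w ≠ x := fun h => by
            subst h; exact hxw.ne rfl
          have hwq : w ∈ q.support := by
            rcases (SimpleGraph.Walk.mem_support_iff _).mp hw with h | h
            · exact absurd h hwx
            · exact h
          set q1 := q.takeUntil w hwq with hq1
          have hq1path : q1.IsPath := hq.1.takeUntil hwq
          have hxq1 : x ∉ q1.support :=
            fun hx => hq.2 (SimpleGraph.Walk.support_takeUntil_subset _ hwq hx)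
          have hq0 : (SimpleGraph.Walk.cons hxc q1).IsPath := by
            rw [SimpleGraph.Walk.cons_isPath_iff]; exact ⟨hq1path, hxq1⟩
          have hcyc : (SimpleGraph.Walk.cons hxw.symm (SimpleGraph.Walk.cons hxc q1)).IsCycle := by
            rw [SimpleGraph.Walk.cons_isCycle_iff]
            refine ⟨hq0, ?_⟩
            intro he
            rw [SimpleGraph.Walk.edges_cons, List.mem_cons] at he
            rcases he with he | he
            · rw [Sym2.eq_iff] at he
              rcases he with ⟨h1, _⟩ | ⟨h1, _⟩
              · exact hwx h1
              · exact hwc h1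
            · exact hxq1 (SimpleGraph.Walk.snd_mem_support_of_mem_edges q1 he)
          exact hac _ hcyc
        · refine ⟨w, y, .cons hxw.symm (SimpleGraph.Walk.cons hxc q), ?_, ?_⟩
          · rw [SimpleGraph.Walk.cons_isPath_iff]; exact ⟨hp, hw⟩
          · simp only [SimpleGraph.Walk.length_cons] at hlen ⊢
            omega
  obtain ⟨x, y, p, hp, hlen⟩ := key (Fintype.card W)
  have := hp.length_lt
  omega

variable [Fintype V] (G : SimpleGraph V)

/-- Alternating sum over the independent subsets of `A`. -/
noncomputable def altSum (A : Finset V) : ℤ :=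
  ∑ s ∈ A.powerset.filter G.IsIndep, (-1 : ℤ) ^ s.card

lemma indep_subset {s t : Finset V} (h : t ⊆ s) (hs : G.IsIndep s) : G.IsIndep t :=
  fun u hu v hv => hs u (h hu) v (h hv)

lemma altSum_natAbs_le_one : ∀ A : Finset V,
    (G.induce (↑A : Set V)).IsAcyclic → (altSum G A).natAbs ≤ 1 := by
  intro A
  induction A using Finset.strongInduction with
  | _ A ih =>
  intro hac
  by_cases hedge : ∃ u ∈ A, ∃ v ∈ A, G.Adj u v
  · obtain ⟨u₀, hu₀, v₀, hv₀, hadj⟩ := hedge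
    have hadj' : (G.induce (↑A : Set V)).Adj ⟨u₀, by simpa using hu₀⟩ ⟨v₀, by simpa using hv₀⟩ :=
      hadj
    obtain ⟨v', u', hvu', hleaf'⟩ := exists_leaf _ hac hadj'
    set v : V := ↑v' with hv
    set u : V := ↑u' with hu
    have hvA : v ∈ A := Finset.mem_coe.mp v'.2
    have huA : u ∈ A := Finset.mem_coe.mp u'.2
    have hvu : G.Adj v u := hvu'
    have hleaf : ∀ w ∈ A, G.Adj v w → w = u := by
      intro w hw hadjw
      have : (⟨w, by simpa using hw⟩ : (↑A : Set V)) = u' :=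
        hleaf' ⟨w, by simpa using hw⟩ hadjw
      exact congrArg Subtype.val this
    have hne_uv : u ≠ v := fun h => hvu.ne (h ▸ rfl)
    -- split the sum according to whether u is in the set
    have hsplit : altSum G A =
        (∑ s ∈ (A.powerset.filter G.IsIndep).filter (fun s => u ∈ s), (-1 : ℤ) ^ s.card)
        + ∑ s ∈ (A.powerset.filter G.IsIndep).filter (fun s => ¬ u ∈ s), (-1 : ℤ) ^ s.card :=
      (Finset.sum_filter_add_sum_filter_not _ _ _).symm
    -- the second sum vanishes by the involution s ↦ s Δ {v}
    have hzero : ∑ s ∈ (A.powerset.filter G.IsIndep).filter (fun s => ¬ u ∈ s),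
        (-1 : ℤ) ^ s.card = 0 := by
      refine Finset.sum_involution
        (g := fun s _ => if v ∈ s then s.erase v else insert v s) ?_ ?_ ?_ ?_
      · intro s _
        by_cases hvs : v ∈ s
        · simp only [hvs, if_true]
          have : s.card = (s.erase v).card + 1 := (Finset.card_erase_add_one hvs).symm
          rw [this, pow_succ]
          ring
        · simp only [hvs, if_false]
          rw [Finset.card_insert_of_notMem hvs, pow_succ]
          ring
      · intro s _ _
        by_cases hvs : v ∈ s
        · simp only [hvs, if_true]
          intro h
          exact (Finset.notMem_erase v s) (by rw [h]; exact hvs)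
        · simp only [hvs, if_false]
          intro h
          exact hvs (by rw [← h]; exact Finset.mem_insert_self v s)
      · intro s hs
        simp only [Finset.mem_filter, Finset.mem_powerset] at hs ⊢
        obtain ⟨⟨hsA, hsI⟩, hus⟩ := hs
        by_cases hvs : v ∈ s
        · simp only [hvs, if_true]
          exact ⟨⟨(Finset.erase_subset v s).trans hsA,
            indep_subset G (Finset.erase_subset v s) hsI⟩,
            fun h => hus (Finset.mem_of_mem_erase h)⟩
        · simp only [hvs, if_false]
          refine ⟨⟨Finset.insert_subset hvA hsA, ?_⟩, ?_⟩
          · intro x hx y hy hxy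
            rcases Finset.mem_insert.mp hx with rfl | hx
            · rcases Finset.mem_insert.mp hy with rfl | hy
              · exact hxy.ne rfl
              · exact hus ((hleaf y (hsA hy) hxy) ▸ hy)
            · rcases Finset.mem_insert.mp hy with rfl | hy
              · exact hus ((hleaf x (hsA hx) hxy.symm) ▸ hx)
              · exact hsI x hx y hy hxy
          · intro h
            rcases Finset.mem_insert.mp h with h | h
            · exact hne_uv h
            · exact hus h
      · intro s _
        by_cases hvs : v ∈ s
        · simp [hvs, Finset.notMem_erase, Finset.insert_erase]
        · simp [hvs, Finset.erase_insert]
    -- the first sum equals minus the alternating sum over A' = A minus the closed nbhd of u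
    set A' : Finset V := (A.erase u).filter (fun w => ¬ G.Adj u w) with hA'
    have hfirst : ∑ s ∈ (A.powerset.filter G.IsIndep).filter (fun s => u ∈ s),
        (-1 : ℤ) ^ s.card = ∑ t ∈ A'.powerset.filter G.IsIndep, (-((-1 : ℤ) ^ t.card)) := by
      refine Finset.sum_nbij' (fun s => s.erase u) (fun t => insert u t) ?_ ?_ ?_ ?_ ?_
      · intro s hs
        simp only [Finset.mem_filter, Finset.mem_powerset] at hs ⊢
        obtain ⟨⟨hsA, hsI⟩, hus⟩ := hs
        refine ⟨?_, indep_subset G (Finset.erase_subset u s) hsI⟩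
        intro w hw
        have hws : w ∈ s := Finset.mem_of_mem_erase hw
        have hwu : w ≠ u := Finset.ne_of_mem_erase hw
        simp only [hA', Finset.mem_filter, Finset.mem_erase]
        exact ⟨⟨hwu, hsA hws⟩, hsI u hus w hws⟩
      · intro t ht
        simp only [Finset.mem_filter, Finset.mem_powerset] at ht ⊢
        obtain ⟨htA', htI⟩ := ht
        have htA : t ⊆ A := fun w hw => by
          have := htA' hw
          simp only [hA', Finset.mem_filter, Finset.mem_erase] at this
          exact this.1.2
        have hut : u ∉ t := fun h => by
          have := htA' h
          simp only [hA', Finset.mem_filter, Finset.mem_erase] at this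
          exact this.1.1 rfl
        refine ⟨⟨Finset.insert_subset huA htA, ?_⟩, Finset.mem_insert_self u t⟩
        intro x hx y hy hxy
        have hnadj : ∀ w ∈ t, ¬ G.Adj u w := fun w hw => by
          have := htA' hw
          simp only [hA', Finset.mem_filter, Finset.mem_erase] at this
          exact this.2
        rcases Finset.mem_insert.mp hx with rfl | hx
        · rcases Finset.mem_insert.mp hy with rfl | hy
          · exact hxy.ne rfl
          · exact hnadj y hy hxy
        · rcases Finset.mem_insert.mp hy with rfl | hy
          · exact hnadj x hx hxy.symm
          · exact htI x hx y hy hxy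
      · intro s hs
        simp only [Finset.mem_filter] at hs
        exact Finset.insert_erase hs.2
      · intro t ht
        simp only [Finset.mem_filter, Finset.mem_powerset] at ht
        have hut : u ∉ t := fun h => by
          have := ht.1 h
          simp only [hA', Finset.mem_filter, Finset.mem_erase] at this
          exact this.1.1 rfl
        exact Finset.erase_insert hut
      · intro s hs
        simp only [Finset.mem_filter] at hs
        have : s.card = (s.erase u).card + 1 := (Finset.card_erase_add_one hs.2).symm
        rw [this, pow_succ]
        ring
    have hA'sub : A' ⊂ A := by
      refine Finset.ssubset_iff_of_subset (fun w hw => ?_) |>.mpr ⟨u, huA, fun h => ?_⟩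
      · simp only [hA', Finset.mem_filter, Finset.mem_erase] at hw
        exact hw.1.2
      · simp only [hA', Finset.mem_filter, Finset.mem_erase] at h
        exact h.1.1 rfl
    have hacA' : (G.induce (↑A' : Set V)).IsAcyclic :=
      induce_acyclic_mono G (by exact_mod_cast hA'sub.subset) hac
    have hfin : altSum G A = -(altSum G A') := by
      rw [hsplit, hzero, hfirst, add_zero, altSum]
      rw [Finset.sum_neg_distrib]
    rw [hfin, Int.natAbs_neg]
    exact ih A' hA'sub hacA'
  · -- no edges inside A : every subset is independent
    push_neg at hedge
    have hfilter : A.powerset.filter G.IsIndep = A.powerset := by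
      apply Finset.filter_true_of_mem
      intro s hs
      rw [Finset.mem_powerset] at hs
      intro x hx y hy hxy
      exact hedge x (hs hx) y (hs hy) hxy
    rw [altSum, hfilter, Finset.sum_powerset_neg_one_pow_card]
    split <;> simp

end Aux

/-- If `D` is a nonempty set of vertices such that `G \ D` is a forest, then the
absolute value of `∑_{σ indep in G} (-1)^{|σ|}` is at most the number of independent
sets of the induced subgraph `G[D]`. -/
theorem abs_alternating_sum_le_indep_count {V : Type*} [Fintype V] (G : SimpleGraph V)
    (D : Finset V) (hD : D.Nonempty)
    (hforest : (G.induce ((↑D : Set V)ᶜ)).IsAcyclic) :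
    (∑ s ∈ Finset.univ.filter G.IsIndep, (-1 : ℤ) ^ s.card).natAbs
      ≤ (Finset.univ.filter (fun s => s ⊆ D ∧ G.IsIndep s)).card := by
  classical
  set T : Finset (Finset V) := Finset.univ.filter (fun s => s ⊆ D ∧ G.IsIndep s) with hT
  have hmaps : ∀ s ∈ Finset.univ.filter G.IsIndep, s ∩ D ∈ T := by
    intro s hs
    simp only [hT, Finset.mem_filter, Finset.mem_univ, true_and] at hs ⊢
    exact ⟨Finset.inter_subset_right, indep_subset G Finset.inter_subset_left hs⟩
  have h1 : ∑ s ∈ Finset.univ.filter G.IsIndep, (-1 : ℤ) ^ s.card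
      = ∑ τ ∈ T, ∑ s ∈ (Finset.univ.filter G.IsIndep).filter (fun s => s ∩ D = τ),
        (-1 : ℤ) ^ s.card :=
    (Finset.sum_fiberwise_of_maps_to hmaps _).symm
  -- bound each fiber
  have hfiber : ∀ τ ∈ T,
      (∑ s ∈ (Finset.univ.filter G.IsIndep).filter (fun s => s ∩ D = τ),
        (-1 : ℤ) ^ s.card).natAbs ≤ 1 := by
    intro τ hτ
    simp only [hT, Finset.mem_filter, Finset.mem_univ, true_and] at hτ
    obtain ⟨hτD, hτI⟩ := hτ
    set Aτ : Finset V := Finset.univ.filter (fun w => w ∉ D ∧ ∀ x ∈ τ, ¬ G.Adj x w) with hAτ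
    have hbij : ∑ s ∈ (Finset.univ.filter G.IsIndep).filter (fun s => s ∩ D = τ),
        (-1 : ℤ) ^ s.card
        = ∑ σ ∈ Aτ.powerset.filter G.IsIndep, ((-1 : ℤ) ^ τ.card * (-1 : ℤ) ^ σ.card) := by
      refine Finset.sum_nbij' (fun s => s \ D) (fun σ => σ ∪ τ) ?_ ?_ ?_ ?_ ?_
      · intro s hs
        simp only [Finset.mem_filter, Finset.mem_univ, true_and, Finset.mem_powerset] at hs ⊢
        obtain ⟨hsI, hsD⟩ := hs
        refine ⟨?_, indep_subset G (Finset.sdiff_subset) hsI⟩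
        intro w hw
        rw [Finset.mem_sdiff] at hw
        simp only [hAτ, Finset.mem_filter, Finset.mem_univ, true_and]
        refine ⟨hw.2, fun x hx => ?_⟩
        have hxs : x ∈ s := by
          rw [← hsD] at hx
          exact (Finset.mem_inter.mp hx).1
        exact hsI x hxs w hw.1
      · intro σ hσ
        simp only [Finset.mem_filter, Finset.mem_univ, true_and, Finset.mem_powerset] at hσ ⊢
        obtain ⟨hσA, hσI⟩ := hσ
        have hσfact : ∀ w ∈ σ, w ∉ D ∧ ∀ x ∈ τ, ¬ G.Adj x w := by
          intro w hw
          have := hσA hw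
          simpa only [hAτ, Finset.mem_filter, Finset.mem_univ, true_and] using this
        constructor
        · intro x hx y hy hxy
          rcases Finset.mem_union.mp hx with hx | hx
          · rcases Finset.mem_union.mp hy with hy | hy
            · exact hσI x hx y hy hxy
            · exact (hσfact x hx).2 y hy hxy.symm
          · rcases Finset.mem_union.mp hy with hy | hy
            · exact (hσfact y hy).2 x hx hxy
            · exact hτI x hx y hy hxy
        · rw [Finset.union_inter_distrib_right]
          have h1 : σ ∩ D = ∅ := by
            rw [Finset.eq_empty_iff_forall_notMem]
            intro w hw
            exact (hσfact w (Finset.mem_inter.mp hw).1).1 (Finset.mem_inter.mp hw).2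
          have h2 : τ ∩ D = τ := Finset.inter_eq_left.mpr hτD
          rw [h1, h2, Finset.empty_union]
      · intro s hs
        simp only [Finset.mem_filter, Finset.mem_univ, true_and] at hs
        show s \ D ∪ τ = s
        rw [← hs.2, Finset.sdiff_union_inter]
      · intro σ hσ
        simp only [Finset.mem_filter, Finset.mem_powerset] at hσ
        have hσD : ∀ w ∈ σ, w ∉ D := by
          intro w hw
          have := hσ.1 hw
          simp only [hAτ, Finset.mem_filter, Finset.mem_univ, true_and] at this
          exact this.1
        show (σ ∪ τ) \ D = σ
        rw [Finset.union_sdiff_distrib]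
        have h1 : σ \ D = σ := by
          rw [Finset.sdiff_eq_self_iff_disjoint]
          exact Finset.disjoint_left.mpr fun a ha hb => hσD a ha hb
        have h2 : τ \ D = ∅ := Finset.sdiff_eq_empty_iff_subset.mpr hτD
        rw [h1, h2, Finset.union_empty]
      · intro s hs
        simp only [Finset.mem_filter, Finset.mem_univ, true_and] at hs
        have hcard : (s ∩ D).card + (s \ D).card = s.card := Finset.card_inter_add_card_sdiff s D
        show ((-1:ℤ)) ^ s.card = (-1:ℤ) ^ τ.card * (-1:ℤ) ^ (s \ D).card
        rw [← pow_add]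
        congr 1
        rw [← hs.2]
        omega
    rw [hbij, ← Finset.mul_sum]
    have hAacyclic : (G.induce (↑Aτ : Set V)).IsAcyclic := by
      refine induce_acyclic_mono G ?_ hforest
      intro x hx
      simp only [Finset.coe_filter, Set.mem_setOf_eq, hAτ, Finset.mem_univ, true_and,
        Finset.mem_coe, Finset.mem_filter] at hx
      simp only [Set.mem_compl_iff, Finset.mem_coe]
      exact hx.1
    have hcore : (altSum G Aτ).natAbs ≤ 1 := altSum_natAbs_le_one G Aτ hAacyclic
    rw [show (∑ σ ∈ Aτ.powerset.filter G.IsIndep, (-1 : ℤ) ^ σ.card) = altSum G Aτ from rfl]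
    rw [Int.natAbs_mul, Int.natAbs_pow]
    simpa using hcore
  calc (∑ s ∈ Finset.univ.filter G.IsIndep, (-1 : ℤ) ^ s.card).natAbs
      = (∑ τ ∈ T, ∑ s ∈ (Finset.univ.filter G.IsIndep).filter (fun s => s ∩ D = τ),
          (-1 : ℤ) ^ s.card).natAbs := by rw [h1]
    _ ≤ ∑ τ ∈ T, (∑ s ∈ (Finset.univ.filter G.IsIndep).filter (fun s => s ∩ D = τ),
          (-1 : ℤ) ^ s.card).natAbs := nat_abs_sum_le _ _
    _ ≤ ∑ _τ ∈ T, 1 := Finset.sum_le_sum hfiber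
    _ = T.card := by simp
end

section
/- For the cycle C_m, the alternating sum Σ_σ (-1)^{|σ|} over independent sets σ of C_m equals 2·(-1)^n if m = 3n, and equals (-1)^{⌈m/3⌉}·(±1) otherwise; in particular its absolute value is 2 when 3 | m and 1 otherwise. -/
open Finset

attribute [local instance] Classical.propDecidable

/-- no two consecutive naturals -/
def NC (s : Finset ℕ) : Prop := ∀ i ∈ s, i + 1 ∉ s

noncomputable def pf (s : Finset ℕ) : ℤ := if NC s then (-1 : ℤ) ^ s.card else 0

noncomputable def p (a n : ℕ) : ℤ := ∑ s ∈ (Finset.Ico a (a + n)).powerset, pf s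

def q : ℕ → ℤ
  | 0 => 1
  | 1 => 0
  | (n+2) => q (n+1) - q n

lemma NC_empty : NC ∅ := by intro i hi; simp at hi

lemma NC_singleton (a : ℕ) : NC {a} := by
  intro i hi hc; simp at hi hc; omega

lemma p_zero (a : ℕ) : p a 0 = 1 := by
  simp [p, pf, NC_empty]

lemma p_one (a : ℕ) : p a 1 = 0 := by
  have : Finset.Ico a (a + 1) = insert a ∅ := by rw [Nat.Ico_succ_singleton]; simp
  rw [p, this, Finset.sum_powerset_insert (by simp)]
  simp [pf, NC_empty, NC_singleton]

lemma NC_insert_iff {n : ℕ} {t : Finset ℕ} (ht : ∀ x ∈ t, x < n + 1) :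
    NC (insert (n + 1) t) ↔ NC t ∧ n ∉ t := by
  constructor
  · intro h
    refine ⟨fun i hi hc => h i (by simp [hi]) (by simp [hc]), fun hn => ?_⟩
    exact h n (by simp [hn]) (by simp)
  · rintro ⟨h1, h2⟩ i hi
    rcases Finset.mem_insert.mp hi with rfl | hi'
    · intro hc
      rcases Finset.mem_insert.mp hc with h | h
      · omega
      · exact absurd (ht _ h) (by omega)
    · intro hc
      rcases Finset.mem_insert.mp hc with h | h
      · have : i = n := by omega
        exact h2 (this ▸ hi')
      · exact h1 i hi' h

lemma p_rec (a n : ℕ) : p a (n + 2) = p a (n + 1) - p a n := by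
  have h1 : Finset.Ico a (a + (n + 2)) = insert (a + n + 1) (Finset.Ico a (a + n + 1)) := by
    rw [show a + (n+2) = (a + n + 1) + 1 by ring, Nat.Ico_succ_right_eq_insert_Ico (by omega)]
  have h2 : Finset.Ico a (a + (n + 1)) = Finset.Ico a (a + n + 1) := by ring_nf
  rw [p, h1, Finset.sum_powerset_insert (by simp)]
  have key : ∑ t ∈ (Finset.Ico a (a + n + 1)).powerset, pf (insert (a + n + 1) t)
      = - p a n := by
    have h3 : Finset.Ico a (a + n + 1) = insert (a + n) (Finset.Ico a (a + n)) :=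
      Nat.Ico_succ_right_eq_insert_Ico (by omega)
    have step : ∀ t ∈ (Finset.Ico a (a + n + 1)).powerset,
        pf (insert (a + n + 1) t) = if a + n ∈ t then 0 else - pf t := by
      intro t ht
      rw [Finset.mem_powerset] at ht
      have hb : ∀ x ∈ t, x < a + n + 1 := fun x hx => (Finset.mem_Ico.mp (ht hx)).2
      have hni : a + n + 1 ∉ t := fun h => by have := hb _ h; omega
      rw [pf, pf, NC_insert_iff hb, Finset.card_insert_of_notMem hni]
      by_cases hmem : a + n ∈ t
      · simp [hmem]
      · by_cases hnc : NC t
        · simp [hmem, hnc, pow_succ]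
        · simp [hmem, hnc]
    rw [Finset.sum_congr rfl step, h3, Finset.sum_powerset_insert (by simp)]
    have e1 : ∀ t ∈ (Finset.Ico a (a + n)).powerset,
        (if a + n ∈ t then 0 else - pf t) = - pf t := by
      intro t ht
      rw [Finset.mem_powerset] at ht
      have : a + n ∉ t := fun h => by have := (Finset.mem_Ico.mp (ht h)).2; omega
      simp [this]
    have e2 : ∀ t ∈ (Finset.Ico a (a + n)).powerset,
        (if a + n ∈ insert (a + n) t then 0 else - pf (insert (a+n) t)) = 0 := by
      intro t ht; simp
    rw [Finset.sum_congr rfl e1, Finset.sum_congr rfl e2, Finset.sum_const_zero, add_zero,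
      p, Finset.sum_neg_distrib]
  have h2' : p a (n + 1) = ∑ t ∈ (Finset.Ico a (a + n + 1)).powerset, pf t := by
    rw [p, show a + (n + 1) = a + n + 1 by ring]
  rw [key, ← h2']
  ring

lemma p_eq_q (a n : ℕ) : p a n = q n := by
  induction n using Nat.strong_induction_on with
  | _ n ih =>
    match n with
    | 0 => exact p_zero a
    | 1 => exact p_one a
    | (k+2) => rw [p_rec, ih (k+1) (by omega), ih k (by omega), q]

lemma q_rec (n : ℕ) : q (n + 2) = q (n + 1) - q n := rfl

lemma q_add_three (n : ℕ) : q (n + 3) = - q n := by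
  rw [show n + 3 = (n + 1) + 2 by ring, q_rec, q_rec]; ring

lemma q_add_six (n : ℕ) : q (n + 6) = q n := by
  rw [show n + 6 = (n + 3) + 3 by ring, q_add_three, q_add_three, neg_neg]

lemma q_mod (n : ℕ) : q n = q (n % 6) := by
  induction n using Nat.strong_induction_on with
  | _ n ih =>
    by_cases h : n < 6
    · rw [Nat.mod_eq_of_lt h]
    · obtain ⟨k, rfl⟩ : ∃ k, n = k + 6 := ⟨n - 6, by omega⟩
      rw [q_add_six, ih k (by omega), Nat.add_mod_right]

noncomputable def cf (m : ℕ) (s : Finset ℕ) : ℤ :=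
  if NC s ∧ ¬(0 ∈ s ∧ m - 1 ∈ s) then (-1 : ℤ) ^ s.card else 0

noncomputable def C (m : ℕ) : ℤ := ∑ s ∈ (Finset.range m).powerset, cf m s

lemma C_eq (k : ℕ) : C (k + 3) = q (k + 2) - q k := by
  rw [C, Finset.range_add_one, Finset.sum_powerset_insert (by simp)]
  have first : ∑ t ∈ (Finset.range (k + 2)).powerset, cf (k + 3) t = q (k + 2) := by
    have e : ∀ t ∈ (Finset.range (k + 2)).powerset, cf (k + 3) t = pf t := by
      intro t ht
      rw [Finset.mem_powerset] at ht
      have : (k + 3 - 1) ∉ t := fun h => by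
        have := Finset.mem_range.mp (ht h); omega
      simp only [cf, pf, this, and_false, not_false_iff, and_true]
    rw [Finset.sum_congr rfl e, ← p_eq_q 0 (k + 2), p, Finset.range_eq_Ico, zero_add]
  have second : ∑ t ∈ (Finset.range (k + 2)).powerset, cf (k + 3) (insert (k + 2) t)
      = - q k := by
    have e : ∀ t ∈ (Finset.range (k + 2)).powerset,
        cf (k + 3) (insert (k + 2) t)
          = if 0 ∈ t ∨ k + 1 ∈ t then 0 else - pf t := by
      intro t ht
      rw [Finset.mem_powerset] at ht
      have hb : ∀ x ∈ t, x < k + 2 := fun x hx => Finset.mem_range.mp (ht hx)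
      have hni : k + 2 ∉ t := fun h => by have := hb _ h; omega
      have hm1 : k + 3 - 1 = k + 2 := by omega
      rw [cf, hm1]
      have h0 : (0 : ℕ) ∈ insert (k + 2) t ↔ 0 ∈ t := by
        simp [Finset.mem_insert]
      have hNC : NC (insert (k + 2) t) ↔ NC t ∧ k + 1 ∉ t := NC_insert_iff hb
      have hk2 : (k + 2) ∈ insert (k + 2) t := Finset.mem_insert_self _ _
      rw [Finset.card_insert_of_notMem hni]
      by_cases hc : 0 ∈ t ∨ k + 1 ∈ t
      · have : ¬ (NC (insert (k + 2) t) ∧ ¬(0 ∈ insert (k + 2) t ∧ k + 2 ∈ insert (k + 2) t)) := by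
          rcases hc with hc | hc
          · rintro ⟨-, h⟩; exact h ⟨h0.mpr hc, hk2⟩
          · rintro ⟨h, -⟩; exact (hNC.mp h).2 hc
        rw [if_neg this, if_pos hc]
      · push_neg at hc
        have hcond : NC (insert (k + 2) t) ∧ ¬(0 ∈ insert (k + 2) t ∧ k + 2 ∈ insert (k + 2) t)
            ↔ NC t := by
          constructor
          · rintro ⟨h, -⟩; exact (hNC.mp h).1
          · intro h; exact ⟨hNC.mpr ⟨h, hc.2⟩, fun hh => hc.1 (h0.mp hh.1)⟩
        rw [if_congr hcond rfl rfl]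
        simp only [hc.1, hc.2, or_self, if_false, pf]
        by_cases hnc : NC t
        · simp [hnc, pow_succ]
        · simp [hnc]
    rw [Finset.sum_congr rfl e, Finset.range_add_one, Finset.sum_powerset_insert (by simp)]
    have e2 : ∀ t ∈ (Finset.range (k + 1)).powerset,
        (if 0 ∈ insert (k + 1) t ∨ k + 1 ∈ insert (k + 1) t then 0
          else - pf (insert (k + 1) t)) = 0 := by
      intro t ht; simp
    have e1 : ∀ t ∈ (Finset.range (k + 1)).powerset,
        (if 0 ∈ t ∨ k + 1 ∈ t then 0 else - pf t)
          = if 0 ∈ t then 0 else - pf t := by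
      intro t ht
      rw [Finset.mem_powerset] at ht
      have : k + 1 ∉ t := fun h => by have := Finset.mem_range.mp (ht h); omega
      simp [this]
    rw [Finset.sum_congr rfl e1, Finset.sum_congr rfl e2, Finset.sum_const_zero, add_zero]
    have hsplit : Finset.range (k + 1) = insert 0 (Finset.Ico 1 (k + 1)) := by
      ext x; simp [Finset.mem_range, Finset.mem_Ico, Finset.mem_insert]; omega
    rw [hsplit, Finset.sum_powerset_insert (by simp)]
    have f2 : ∀ t ∈ (Finset.Ico 1 (k + 1)).powerset,
        (if 0 ∈ insert 0 t then 0 else - pf (insert 0 t)) = 0 := by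
      intro t ht; simp
    have f1 : ∀ t ∈ (Finset.Ico 1 (k + 1)).powerset,
        (if 0 ∈ t then 0 else - pf t) = - pf t := by
      intro t ht
      rw [Finset.mem_powerset] at ht
      have : 0 ∉ t := fun h => by have := (Finset.mem_Ico.mp (ht h)).1; omega
      simp [this]
    rw [Finset.sum_congr rfl f1, Finset.sum_congr rfl f2, Finset.sum_const_zero, add_zero,
      Finset.sum_neg_distrib]
    have : ∑ t ∈ (Finset.Ico 1 (k + 1)).powerset, pf t = q k := by
      rw [← p_eq_q 1 k, p, show 1 + k = k + 1 by ring]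
    rw [this]
  rw [first, second]
  ring

lemma mod_eq_one_iff {x m : ℕ} (hm : 2 ≤ m) (hx : x < 2 * m) :
    x % m = 1 ↔ x = 1 ∨ x = m + 1 := by
  rcases Nat.lt_or_ge x m with h | h
  · rw [Nat.mod_eq_of_lt h]; omega
  · have h2 : x - m < m := by omega
    rw [Nat.mod_eq_sub_mod h, Nat.mod_eq_of_lt h2]; omega

lemma adj_iff {m : ℕ} (hm : 3 ≤ m) (u v : Fin m) :
    (SimpleGraph.cycleGraph m).Adj u v ↔
      (u.val = v.val + 1 ∨ v.val = u.val + 1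
        ∨ (u.val = 0 ∧ v.val = m - 1) ∨ (v.val = 0 ∧ u.val = m - 1)) := by
  rw [SimpleGraph.cycleGraph_adj']
  have hu := u.isLt; have hv := v.isLt
  have hsub : ∀ a b : Fin m, (a - b).val = ((m - b.val) + a.val) % m := by
    intro a b; rw [Fin.sub_def]
  rw [hsub, hsub, mod_eq_one_iff (by omega) (by omega), mod_eq_one_iff (by omega) (by omega)]
  omega

lemma indep_iff {m : ℕ} (hm : 3 ≤ m) (s : Finset (Fin m)) :
    (SimpleGraph.cycleGraph m).IsIndep s ↔
      (NC (s.image Fin.val) ∧ ¬(0 ∈ s.image Fin.val ∧ m - 1 ∈ s.image Fin.val)) := by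
  constructor
  · intro h
    constructor
    · intro x hx hx1
      obtain ⟨u, hu, hux⟩ := Finset.mem_image.mp hx
      obtain ⟨v, hv, hvx⟩ := Finset.mem_image.mp hx1
      exact h u hu v hv ((adj_iff hm u v).mpr (Or.inr (Or.inl (by omega))))
    · rintro ⟨h0, h1⟩
      obtain ⟨u, hu, hux⟩ := Finset.mem_image.mp h0
      obtain ⟨v, hv, hvx⟩ := Finset.mem_image.mp h1
      exact h u hu v hv ((adj_iff hm u v).mpr (Or.inr (Or.inr (Or.inl ⟨hux, hvx⟩))))
  · rintro ⟨hnc, hne⟩ u hu v hv hadj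
    have hmem : ∀ w : Fin m, w ∈ s → (w.val ∈ s.image Fin.val) :=
      fun w hw => Finset.mem_image_of_mem _ hw
    rcases (adj_iff hm u v).mp hadj with h | h | h | h
    · exact hnc _ (hmem v hv) (by rw [← h]; exact hmem u hu)
    · exact hnc _ (hmem u hu) (by rw [← h]; exact hmem v hv)
    · exact hne ⟨by rw [← h.1]; exact hmem u hu, by rw [← h.2]; exact hmem v hv⟩
    · exact hne ⟨by rw [← h.1]; exact hmem v hv, by rw [← h.2]; exact hmem u hu⟩

lemma sum_eq_C (m : ℕ) (hm : 3 ≤ m) :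
    ∑ s ∈ Finset.univ.filter (SimpleGraph.cycleGraph m).IsIndep,
      (-1 : ℤ) ^ s.card = C m := by
  rw [Finset.sum_filter, C]
  refine Finset.sum_nbij' (i := fun s : Finset (Fin m) => s.image Fin.val)
    (j := fun t : Finset ℕ => Finset.univ.filter (fun u : Fin m => u.val ∈ t))
    (fun s _ => ?_) (fun t _ => Finset.mem_univ _) (fun s _ => ?_) (fun t ht => ?_)
    (fun s _ => ?_)
  · rw [Finset.mem_powerset]
    intro x hx
    obtain ⟨u, _, rfl⟩ := Finset.mem_image.mp hx
    exact Finset.mem_range.mpr u.isLt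
  · ext u
    simp only [Finset.mem_filter, Finset.mem_univ, true_and, Finset.mem_image]
    constructor
    · rintro ⟨v, hv, hvu⟩; rwa [Fin.val_injective hvu] at hv
    · intro hu; exact ⟨u, hu, rfl⟩
  · rw [Finset.mem_powerset] at ht
    ext x
    simp only [Finset.mem_image, Finset.mem_filter, Finset.mem_univ, true_and]
    constructor
    · rintro ⟨u, hu, rfl⟩; exact hu
    · intro hx
      have hlt : x < m := Finset.mem_range.mp (ht hx)
      exact ⟨⟨x, hlt⟩, hx, rfl⟩
  · rw [cf]
    by_cases h : (SimpleGraph.cycleGraph m).IsIndep s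
    · rw [if_pos h, if_pos ((indep_iff hm s).mp h),
        Finset.card_image_of_injective _ Fin.val_injective]
    · rw [if_neg h, if_neg (fun hc => h ((indep_iff hm s).mpr hc))]

lemma q0 : q 0 = 1 := rfl
lemma q1 : q 1 = 0 := rfl
lemma q2 : q 2 = -1 := by rw [show (2:ℕ) = 0 + 2 from rfl, q_rec, q0, q1]; norm_num
lemma q3 : q 3 = -1 := by rw [show (3:ℕ) = 1 + 2 from rfl, q_rec, q1, q2]; norm_num
lemma q4 : q 4 = 0 := by rw [show (4:ℕ) = 2 + 2 from rfl, q_rec, q2, q3]; norm_num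
lemma q5 : q 5 = 1 := by rw [show (5:ℕ) = 3 + 2 from rfl, q_rec, q3, q4]; norm_num

/-- For the cycle `C_m` (`m ≥ 3`), the alternating sum `∑_σ (-1)^{|σ|}` over independent
sets equals `2·(-1)^n` when `m = 3n`, and has absolute value `1` when `3 ∤ m`. -/
theorem alternating_sum_indep_cycle (m : ℕ) (hm : 3 ≤ m) :
    (∀ n : ℕ, m = 3 * n →
        ∑ s ∈ Finset.univ.filter (SimpleGraph.cycleGraph m).IsIndep,
          (-1 : ℤ) ^ s.card = 2 * (-1) ^ n)
    ∧ (¬ (3 ∣ m) →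
        (∑ s ∈ Finset.univ.filter (SimpleGraph.cycleGraph m).IsIndep,
          (-1 : ℤ) ^ s.card).natAbs = 1) := by
  obtain ⟨k, rfl⟩ : ∃ k, m = k + 3 := ⟨m - 3, by omega⟩
  have hsum : ∑ s ∈ Finset.univ.filter (SimpleGraph.cycleGraph (k + 3)).IsIndep,
      (-1 : ℤ) ^ s.card = q (k + 2) - q k := by
    rw [sum_eq_C _ hm, C_eq]
  constructor
  · intro n hn
    rw [hsum, q_mod (k + 2), q_mod k]
    rcases Nat.even_or_odd n with ⟨j, hj⟩ | ⟨j, hj⟩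
    · have h1 : (k + 2) % 6 = 5 := by omega
      have h2 : k % 6 = 3 := by omega
      have h3 : (-1 : ℤ) ^ n = 1 := Even.neg_one_pow ⟨j, hj⟩
      rw [h1, h2, h3, q5, q3]; norm_num
    · have h1 : (k + 2) % 6 = 2 := by omega
      have h2 : k % 6 = 0 := by omega
      have h3 : (-1 : ℤ) ^ n = -1 := Odd.neg_one_pow ⟨j, hj⟩
      rw [h1, h2, h3, q2, q0]; norm_num
  · intro hnd
    rw [hsum, q_mod (k + 2), q_mod k]
    have h6 : k % 6 = 1 ∨ k % 6 = 2 ∨ k % 6 = 4 ∨ k % 6 = 5 := by omega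
    rcases h6 with h | h | h | h
    · rw [show (k + 2) % 6 = 3 by omega, h, q3, q1]; norm_num
    · rw [show (k + 2) % 6 = 4 by omega, h, q4, q2]; norm_num
    · rw [show (k + 2) % 6 = 0 by omega, h, q0, q4]; norm_num
    · rw [show (k + 2) % 6 = 1 by omega, h, q1, q5]; norm_num
end
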